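/- For every p ≥ 1 and 0 ≤ i ≤ p, the topological horn |Λ^p_i| (the union of all faces of the standard topological simplex Δ^p except the i-th face) is a retract of Δ^p: there is a continuous map r : Δ^p → |Λ^p_i| whose restriction to |Λ^p_i| is the identity. Consequently, for any topological space Z, the restriction map C(Δ^p, Z) → C(|Λ^p_i|, Z) on sets of continuous maps is surjective. -/

import Mathlib

/-- The standard topological `n`-simplex. -/
def topStdSimplex (n : ℕ) : Set (Fin (n + 1) → ℝ) :=
  {t | (∀ i, 0 ≤ t i) ∧ ∑ i, t i = 1}

/-- The topological horn `|Λ^p_i|`: the union of all faces of `Δ^p` other than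
the `i`-th face, i.e. the points of `Δ^p` with some coordinate `t j = 0` for
`j ≠ i`. -/
def topHorn (p : ℕ) (i : Fin (p + 1)) : Set (Fin (p + 1) → ℝ) :=
  {t | t ∈ topStdSimplex p ∧ ∃ j, j ≠ i ∧ t j = 0}

section aux

variable {p : ℕ} (i : Fin (p + 1))

/-- Center of projection: `p+1` at coordinate `i`, `-1` elsewhere. -/
noncomputable def hornC (j : Fin (p + 1)) : ℝ := if j = i then (p + 1 : ℝ) else -1

lemma hornErase_nonempty (hp : 1 ≤ p) : (Finset.univ.erase i).Nonempty := by
  rw [← Finset.card_pos, Finset.card_erase_of_mem (Finset.mem_univ i)]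
  simpa using (show 0 < p by omega)

/-- Minimum of the coordinates other than `i`. -/
noncomputable def hornM (hp : 1 ≤ p) (x : Fin (p + 1) → ℝ) : ℝ :=
  (Finset.univ.erase i).inf' (hornErase_nonempty i hp) x

/-- Scaling factor of the radial projection. -/
noncomputable def hornS (hp : 1 ≤ p) (x : Fin (p + 1) → ℝ) : ℝ :=
  (hornM i hp x + 1)⁻¹

/-- The retraction formula. -/
noncomputable def hornR (hp : 1 ≤ p) (x : Fin (p + 1) → ℝ) (j : Fin (p + 1)) : ℝ :=
  hornC i j + hornS i hp x * (x j - hornC i j)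

lemma hornM_nonneg (hp : 1 ≤ p) {x : Fin (p + 1) → ℝ} (hx : x ∈ topStdSimplex p) :
    0 ≤ hornM i hp x :=
  Finset.le_inf' _ _ fun j _ => hx.1 j

lemma hornM_add_pos (hp : 1 ≤ p) {x : Fin (p + 1) → ℝ} (hx : x ∈ topStdSimplex p) :
    0 < hornM i hp x + 1 := by linarith [hornM_nonneg i hp hx]

lemma hornS_pos (hp : 1 ≤ p) {x : Fin (p + 1) → ℝ} (hx : x ∈ topStdSimplex p) :
    0 < hornS i hp x := inv_pos.2 (hornM_add_pos i hp hx)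

lemma hornS_le_one (hp : 1 ≤ p) {x : Fin (p + 1) → ℝ} (hx : x ∈ topStdSimplex p) :
    hornS i hp x ≤ 1 := by
  rw [hornS, inv_le_one_iff₀]
  right; linarith [hornM_nonneg i hp hx]

lemma sum_hornC : ∑ j, hornC i j = 1 := by
  have : ∀ j : Fin (p + 1), hornC i j = (p + 2 : ℝ) * (if j = i then 1 else 0) - 1 := by
    intro j; by_cases h : j = i <;> (simp [hornC, h]; try ring)
  simp only [this, Finset.sum_sub_distrib, ← Finset.mul_sum, Finset.sum_ite_eq',
    Finset.mem_univ, if_pos, Finset.sum_const, Finset.card_univ, Fintype.card_fin]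
  ring

lemma hornR_mem (hp : 1 ≤ p) {x : Fin (p + 1) → ℝ} (hx : x ∈ topStdSimplex p) :
    hornR i hp x ∈ topHorn p i := by
  have hs0 := hornS_pos i hp hx
  have hs1 := hornS_le_one i hp hx
  have hsm : hornS i hp x * (hornM i hp x + 1) = 1 :=
    inv_mul_cancel₀ (ne_of_gt (hornM_add_pos i hp hx))
  refine ⟨⟨?_, ?_⟩, ?_⟩
  · intro j
    by_cases h : j = i
    · have : hornR i hp x j = (p + 1 : ℝ) * (1 - hornS i hp x) + hornS i hp x * x j := by
        simp [hornR, hornC, h]; ring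
      rw [this]
      exact add_nonneg (mul_nonneg (by positivity) (by linarith)) (mul_nonneg hs0.le (hx.1 j))
    · have hjm : hornM i hp x ≤ x j :=
        Finset.inf'_le _ (Finset.mem_erase.2 ⟨h, Finset.mem_univ j⟩)
      have : hornR i hp x j = hornS i hp x * (x j + 1) - 1 := by
        simp [hornR, hornC, h]; ring
      rw [this]
      nlinarith
  · have : ∀ j, hornR i hp x j = hornC i j + hornS i hp x * (x j - hornC i j) := fun _ => rfl
    simp only [hornR, Finset.sum_add_distrib, ← Finset.mul_sum, Finset.sum_sub_distrib,
      sum_hornC, hx.2]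
    ring
  · obtain ⟨j, hj, hjval⟩ := Finset.exists_mem_eq_inf' (hornErase_nonempty i hp) x
    obtain ⟨hji, -⟩ := Finset.mem_erase.1 hj
    refine ⟨j, hji, ?_⟩
    have : hornR i hp x j = hornS i hp x * (x j + 1) - 1 := by
      simp [hornR, hornC, hji]; ring
    have hxj : hornM i hp x = x j := hjval
    rw [this, ← hxj, hornS, inv_mul_cancel₀ (ne_of_gt (hornM_add_pos i hp hx)), sub_self]

lemma hornR_retract (hp : 1 ≤ p) {x : Fin (p + 1) → ℝ} (hx : x ∈ topHorn p i) :
    hornR i hp x = x := by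
  obtain ⟨hxs, j, hji, hj0⟩ := hx
  have hm0 : hornM i hp x = 0 :=
    le_antisymm (by
      have := Finset.inf'_le (b := j) x (Finset.mem_erase.2 ⟨hji, Finset.mem_univ j⟩)
      rwa [hj0] at this) (hornM_nonneg i hp hxs)
  funext k
  simp [hornR, hornS, hm0]

lemma hornR_continuous (hp : 1 ≤ p) :
    Continuous fun x : topStdSimplex p => hornR i hp x.1 := by
  have hm : Continuous fun x : topStdSimplex p => hornM i hp x.1 := by
    apply Continuous.finset_inf'_apply
    intro j _
    exact (continuous_apply j).comp continuous_subtype_val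
  have hs : Continuous fun x : topStdSimplex p => hornS i hp x.1 := by
    apply Continuous.inv₀ (hm.add continuous_const)
    intro x
    exact ne_of_gt (hornM_add_pos i hp x.2)
  apply continuous_pi
  intro j
  exact continuous_const.add (hs.mul
    (((continuous_apply j).comp continuous_subtype_val).sub continuous_const))

end aux

/-- For `p ≥ 1` and `0 ≤ i ≤ p`, the topological horn `|Λ^p_i|` is a retract of
`Δ^p`; consequently, for any topological space `Z`, restriction of continuous
maps `C(Δ^p, Z) → C(|Λ^p_i|, Z)` is surjective. -/
theorem statement11 {p : ℕ} (hp : 1 ≤ p) (i : Fin (p + 1)) :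
    (∃ r : topStdSimplex p → topHorn p i,
        Continuous r ∧ ∀ x : topHorn p i, r ⟨x.1, x.2.1⟩ = x)
    ∧ ∀ (Z : Type) [TopologicalSpace Z] (f : C(topHorn p i, Z)),
        ∃ F : C(topStdSimplex p, Z), ∀ x : topHorn p i, F ⟨x.1, x.2.1⟩ = f x := by
  have hcont : Continuous fun x : topStdSimplex p =>
      (⟨hornR i hp x.1, hornR_mem i hp x.2⟩ : topHorn p i) :=
    (hornR_continuous i hp).subtype_mk _
  have hret : ∀ x : topHorn p i,
      (⟨hornR i hp x.1, hornR_mem i hp x.2.1⟩ : topHorn p i) = x := fun x =>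
    Subtype.ext (hornR_retract i hp x.2)
  refine ⟨⟨fun x => ⟨hornR i hp x.1, hornR_mem i hp x.2⟩, hcont, hret⟩, ?_⟩
  intro Z _ f
  refine ⟨f.comp ⟨_, hcont⟩, fun x => ?_⟩
  simp [hret x]
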